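/- Let V be a finite-dimensional complex vector space, x, y ∈ End(V), i ∈ V, j : V → ℂ a linear functional, and λ ∈ ℂ with λ ≠ 0, satisfying the moment-map equation x∘y − y∘x + i⊗j = λ·Id_V. Then every linear subspace S ⊆ V with x(S) ⊆ S, y(S) ⊆ S and i ∈ S equals V; in particular, i is a cyclic vector for the pair (x, y). -/

import Mathlib

/-- If `x∘y − y∘x + i⊗j = λ·Id` with `λ ≠ 0`, then every subspace invariant under `x` and
`y` and containing `i` is the whole space; in particular `i` is a cyclic vector for
`(x, y)`.  Here `i⊗j` is the rank-at-most-one operator `u ↦ j(u) • i`. -/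
theorem cyclic_of_moment_map_value_nonzero
    (V : Type*) [AddCommGroup V] [Module ℂ V] [FiniteDimensional ℂ V]
    (x y : V →ₗ[ℂ] V) (i : V) (j : V →ₗ[ℂ] ℂ) (lam : ℂ) (hlam : lam ≠ 0)
    (heq : x ∘ₗ y - y ∘ₗ x + j.smulRight i = lam • (LinearMap.id : V →ₗ[ℂ] V)) :
    ∀ S : Submodule ℂ V, S.map x ≤ S → S.map y ≤ S → i ∈ S → S = ⊤ := by
  intro S hxS hyS hiS
  have hx : S ≤ S.comap x := fun v hv => hxS ⟨v, hv, rfl⟩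
  have hy : S ≤ S.comap y := fun v hv => hyS ⟨v, hv, rfl⟩
  set x' := S.mapQ S x hx with hx'def
  set y' := S.mapQ S y hy with hy'def
  have hcomm : x' ∘ₗ y' - y' ∘ₗ x' = lam • (LinearMap.id : (V ⧸ S) →ₗ[ℂ] (V ⧸ S)) := by
    ext w
    have h1 : (x ∘ₗ y - y ∘ₗ x + j.smulRight i) w = (lam • (LinearMap.id : V →ₗ[ℂ] V)) w := by
      rw [heq]
    simp only [LinearMap.add_apply, LinearMap.sub_apply, LinearMap.comp_apply,
      LinearMap.smulRight_apply, LinearMap.smul_apply, LinearMap.id_apply] at h1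
    have h2 : Submodule.Quotient.mk (p := S) (x (y w) - y (x w) + j w • i)
        = Submodule.Quotient.mk (lam • w) := by rw [h1]
    have h3 : Submodule.Quotient.mk (p := S) (j w • i) = 0 := by
      rw [Submodule.Quotient.mk_eq_zero]
      exact S.smul_mem _ hiS
    simp only [Submodule.Quotient.mk_add, Submodule.Quotient.mk_sub, h3, add_zero,
      Submodule.Quotient.mk_smul] at h2
    simpa [x', y', Submodule.mapQ_apply] using h2
  have htr := congrArg (LinearMap.trace ℂ (V ⧸ S)) hcomm
  rw [map_sub, LinearMap.trace_comp_comm', sub_self, map_smul, LinearMap.trace_id] at htr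
  have hdim : (Module.finrank ℂ (V ⧸ S) : ℂ) = 0 := by
    rw [smul_eq_mul, eq_comm, mul_eq_zero] at htr
    rcases htr with h | h
    · exact absurd h hlam
    · exact_mod_cast h
  have : Module.finrank ℂ (V ⧸ S) = 0 := by exact_mod_cast hdim
  rw [Module.finrank_zero_iff] at this
  exact Submodule.Quotient.subsingleton_iff.mp this
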